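/- (Representation Formula) Let Ω⊆𝕆 be an axially symmetric slice domain and let f be slice monogenic on Ω. Then for all real u,v with u+Iv∈Ω and for every pair of imaginary units I,J∈𝕊: f(u+Iv) = ½[f(u+vJ) + f(u−vJ)] + ½ I[J(f(u−vJ) − f(u+vJ))]. -/

import Mathlib

noncomputable section

open MeasureTheory

/-- The octonions `𝕆`, modelled as ℝ⁸ with the Euclidean norm. -/
abbrev Oct : Type := EuclideanSpace ℝ (Fin 8)

namespace Oct

/-- Index table of the octonionic multiplication: `e i * e j = ± e (idxT i j)`. -/
def idxT : Fin 8 → Fin 8 → Fin 8 :=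
  ![![0,1,2,3,4,5,6,7],
    ![1,0,4,5,2,3,7,6],
    ![2,4,0,6,1,7,3,5],
    ![3,5,6,0,7,1,2,4],
    ![4,2,1,7,0,6,5,3],
    ![5,3,7,1,6,0,4,2],
    ![6,7,3,2,5,4,0,1],
    ![7,6,5,4,3,2,1,0]]

/-- Sign table of the octonionic multiplication: `e i * e j = signT i j • e (idxT i j)`. -/
def signT : Fin 8 → Fin 8 → ℝ :=
  ![![1,1,1,1,1,1,1,1],
    ![1,-1,1,1,-1,-1,-1,1],
    ![1,-1,-1,1,1,1,-1,-1],
    ![1,-1,-1,-1,-1,1,1,1],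
    ![1,1,-1,1,-1,-1,1,-1],
    ![1,1,-1,-1,1,-1,-1,1],
    ![1,1,1,-1,-1,1,-1,-1],
    ![1,-1,1,-1,1,-1,1,-1]]

/-- Octonionic multiplication. -/
def omul (x y : Oct) : Oct :=
  (WithLp.equiv 2 (Fin 8 → ℝ)).symm fun k =>
    ∑ i : Fin 8, ∑ j : Fin 8,
      if idxT i j = k then signT i j * x i * y j else 0

/-- Octonionic conjugation `x̄`. -/
def oconj (x : Oct) : Oct :=
  (WithLp.equiv 2 (Fin 8 → ℝ)).symm fun k => if k = 0 then x k else -x k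

/-- Real part of an octonion. -/
def oRe (x : Oct) : ℝ := x 0

/-- The basis octonions `e i`. -/
def unit (i : Fin 8) : Oct := EuclideanSpace.single i 1

/-- The octonion `1`. -/
def oone : Oct := unit 0

/-- Powers of an octonion (powers are unambiguous by power-associativity). -/
def opow (x : Oct) : ℕ → Oct
  | 0 => oone
  | n + 1 => omul (opow x n) x

/-- Inverse of a nonzero octonion. -/
def oinv (x : Oct) : Oct := (‖x‖ ^ 2)⁻¹ • oconj x

/-- A function is left octonionic monogenic on `U` if `𝒟 f = 0` there, where
`𝒟 = ∂/∂x₀ + Σᵢ eᵢ ∂/∂xᵢ` is the octonionic Cauchy–Riemann operator. -/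
def LeftMonogenicOn (f : Oct → Oct) (U : Set Oct) : Prop :=
  ∀ x ∈ U, DifferentiableAt ℝ f x ∧
    ∑ i : Fin 8, omul (unit i) (fderiv ℝ f x (unit i)) = 0

/-- The sphere `𝕊` of imaginary units of `𝕆`. -/
def sphS : Set Oct := {x | oRe x = 0 ∧ ‖x‖ = 1}

/-- The complex slice `ℂ_I = ℝ + ℝ I`. -/
def sliceC (I : Oct) : Set Oct := {x | ∃ u v : ℝ, x = u • oone + v • I}

/-- A function is (left) slice monogenic on `Ω` if its restriction to every slice `ℂ_I`
is holomorphic, i.e. `(∂/∂u + I ∂/∂v) f(u + Iv) = 0`. -/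
def SliceMonogenicOn (f : Oct → Oct) (Ω : Set Oct) : Prop :=
  ∀ I ∈ sphS, ∀ u v : ℝ, u • oone + v • I ∈ Ω →
    DifferentiableAt ℝ (fun p : ℝ × ℝ => f (p.1 • oone + p.2 • I)) (u, v) ∧
    fderiv ℝ (fun p : ℝ × ℝ => f (p.1 • oone + p.2 • I)) (u, v) (1, 0)
      + omul I (fderiv ℝ (fun p : ℝ × ℝ => f (p.1 • oone + p.2 • I)) (u, v) (0, 1)) = 0

end Oct

namespace Oct

lemma oct_ext {x y : Oct} (h : ∀ k, x k = y k) : x = y := PiLp.ext h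

lemma omul_apply (x y : Oct) (k : Fin 8) :
    omul x y k = ∑ i : Fin 8, ∑ j : Fin 8,
      if idxT i j = k then signT i j * x i * y j else 0 := rfl

lemma idxT_0_0 : idxT 0 0 = 0 := rfl
lemma signT_0_0 : signT 0 0 = 1 := rfl
lemma idxT_0_1 : idxT 0 1 = 1 := rfl
lemma signT_0_1 : signT 0 1 = 1 := rfl
lemma idxT_0_2 : idxT 0 2 = 2 := rfl
lemma signT_0_2 : signT 0 2 = 1 := rfl
lemma idxT_0_3 : idxT 0 3 = 3 := rfl
lemma signT_0_3 : signT 0 3 = 1 := rfl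
lemma idxT_0_4 : idxT 0 4 = 4 := rfl
lemma signT_0_4 : signT 0 4 = 1 := rfl
lemma idxT_0_5 : idxT 0 5 = 5 := rfl
lemma signT_0_5 : signT 0 5 = 1 := rfl
lemma idxT_0_6 : idxT 0 6 = 6 := rfl
lemma signT_0_6 : signT 0 6 = 1 := rfl
lemma idxT_0_7 : idxT 0 7 = 7 := rfl
lemma signT_0_7 : signT 0 7 = 1 := rfl
lemma idxT_1_0 : idxT 1 0 = 1 := rfl
lemma signT_1_0 : signT 1 0 = 1 := rfl
lemma idxT_1_1 : idxT 1 1 = 0 := rfl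
lemma signT_1_1 : signT 1 1 = -1 := rfl
lemma idxT_1_2 : idxT 1 2 = 4 := rfl
lemma signT_1_2 : signT 1 2 = 1 := rfl
lemma idxT_1_3 : idxT 1 3 = 5 := rfl
lemma signT_1_3 : signT 1 3 = 1 := rfl
lemma idxT_1_4 : idxT 1 4 = 2 := rfl
lemma signT_1_4 : signT 1 4 = -1 := rfl
lemma idxT_1_5 : idxT 1 5 = 3 := rfl
lemma signT_1_5 : signT 1 5 = -1 := rfl
lemma idxT_1_6 : idxT 1 6 = 7 := rfl
lemma signT_1_6 : signT 1 6 = -1 := rfl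
lemma idxT_1_7 : idxT 1 7 = 6 := rfl
lemma signT_1_7 : signT 1 7 = 1 := rfl
lemma idxT_2_0 : idxT 2 0 = 2 := rfl
lemma signT_2_0 : signT 2 0 = 1 := rfl
lemma idxT_2_1 : idxT 2 1 = 4 := rfl
lemma signT_2_1 : signT 2 1 = -1 := rfl
lemma idxT_2_2 : idxT 2 2 = 0 := rfl
lemma signT_2_2 : signT 2 2 = -1 := rfl
lemma idxT_2_3 : idxT 2 3 = 6 := rfl
lemma signT_2_3 : signT 2 3 = 1 := rfl
lemma idxT_2_4 : idxT 2 4 = 1 := rfl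
lemma signT_2_4 : signT 2 4 = 1 := rfl
lemma idxT_2_5 : idxT 2 5 = 7 := rfl
lemma signT_2_5 : signT 2 5 = 1 := rfl
lemma idxT_2_6 : idxT 2 6 = 3 := rfl
lemma signT_2_6 : signT 2 6 = -1 := rfl
lemma idxT_2_7 : idxT 2 7 = 5 := rfl
lemma signT_2_7 : signT 2 7 = -1 := rfl
lemma idxT_3_0 : idxT 3 0 = 3 := rfl
lemma signT_3_0 : signT 3 0 = 1 := rfl
lemma idxT_3_1 : idxT 3 1 = 5 := rfl
lemma signT_3_1 : signT 3 1 = -1 := rfl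
lemma idxT_3_2 : idxT 3 2 = 6 := rfl
lemma signT_3_2 : signT 3 2 = -1 := rfl
lemma idxT_3_3 : idxT 3 3 = 0 := rfl
lemma signT_3_3 : signT 3 3 = -1 := rfl
lemma idxT_3_4 : idxT 3 4 = 7 := rfl
lemma signT_3_4 : signT 3 4 = -1 := rfl
lemma idxT_3_5 : idxT 3 5 = 1 := rfl
lemma signT_3_5 : signT 3 5 = 1 := rfl
lemma idxT_3_6 : idxT 3 6 = 2 := rfl
lemma signT_3_6 : signT 3 6 = 1 := rfl
lemma idxT_3_7 : idxT 3 7 = 4 := rfl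
lemma signT_3_7 : signT 3 7 = 1 := rfl
lemma idxT_4_0 : idxT 4 0 = 4 := rfl
lemma signT_4_0 : signT 4 0 = 1 := rfl
lemma idxT_4_1 : idxT 4 1 = 2 := rfl
lemma signT_4_1 : signT 4 1 = 1 := rfl
lemma idxT_4_2 : idxT 4 2 = 1 := rfl
lemma signT_4_2 : signT 4 2 = -1 := rfl
lemma idxT_4_3 : idxT 4 3 = 7 := rfl
lemma signT_4_3 : signT 4 3 = 1 := rfl
lemma idxT_4_4 : idxT 4 4 = 0 := rfl
lemma signT_4_4 : signT 4 4 = -1 := rfl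
lemma idxT_4_5 : idxT 4 5 = 6 := rfl
lemma signT_4_5 : signT 4 5 = -1 := rfl
lemma idxT_4_6 : idxT 4 6 = 5 := rfl
lemma signT_4_6 : signT 4 6 = 1 := rfl
lemma idxT_4_7 : idxT 4 7 = 3 := rfl
lemma signT_4_7 : signT 4 7 = -1 := rfl
lemma idxT_5_0 : idxT 5 0 = 5 := rfl
lemma signT_5_0 : signT 5 0 = 1 := rfl
lemma idxT_5_1 : idxT 5 1 = 3 := rfl
lemma signT_5_1 : signT 5 1 = 1 := rfl
lemma idxT_5_2 : idxT 5 2 = 7 := rfl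
lemma signT_5_2 : signT 5 2 = -1 := rfl
lemma idxT_5_3 : idxT 5 3 = 1 := rfl
lemma signT_5_3 : signT 5 3 = -1 := rfl
lemma idxT_5_4 : idxT 5 4 = 6 := rfl
lemma signT_5_4 : signT 5 4 = 1 := rfl
lemma idxT_5_5 : idxT 5 5 = 0 := rfl
lemma signT_5_5 : signT 5 5 = -1 := rfl
lemma idxT_5_6 : idxT 5 6 = 4 := rfl
lemma signT_5_6 : signT 5 6 = -1 := rfl
lemma idxT_5_7 : idxT 5 7 = 2 := rfl
lemma signT_5_7 : signT 5 7 = 1 := rfl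
lemma idxT_6_0 : idxT 6 0 = 6 := rfl
lemma signT_6_0 : signT 6 0 = 1 := rfl
lemma idxT_6_1 : idxT 6 1 = 7 := rfl
lemma signT_6_1 : signT 6 1 = 1 := rfl
lemma idxT_6_2 : idxT 6 2 = 3 := rfl
lemma signT_6_2 : signT 6 2 = 1 := rfl
lemma idxT_6_3 : idxT 6 3 = 2 := rfl
lemma signT_6_3 : signT 6 3 = -1 := rfl
lemma idxT_6_4 : idxT 6 4 = 5 := rfl
lemma signT_6_4 : signT 6 4 = -1 := rfl
lemma idxT_6_5 : idxT 6 5 = 4 := rfl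
lemma signT_6_5 : signT 6 5 = 1 := rfl
lemma idxT_6_6 : idxT 6 6 = 0 := rfl
lemma signT_6_6 : signT 6 6 = -1 := rfl
lemma idxT_6_7 : idxT 6 7 = 1 := rfl
lemma signT_6_7 : signT 6 7 = -1 := rfl
lemma idxT_7_0 : idxT 7 0 = 7 := rfl
lemma signT_7_0 : signT 7 0 = 1 := rfl
lemma idxT_7_1 : idxT 7 1 = 6 := rfl
lemma signT_7_1 : signT 7 1 = -1 := rfl
lemma idxT_7_2 : idxT 7 2 = 5 := rfl
lemma signT_7_2 : signT 7 2 = 1 := rfl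
lemma idxT_7_3 : idxT 7 3 = 4 := rfl
lemma signT_7_3 : signT 7 3 = -1 := rfl
lemma idxT_7_4 : idxT 7 4 = 3 := rfl
lemma signT_7_4 : signT 7 4 = 1 := rfl
lemma idxT_7_5 : idxT 7 5 = 2 := rfl
lemma signT_7_5 : signT 7 5 = -1 := rfl
lemma idxT_7_6 : idxT 7 6 = 1 := rfl
lemma signT_7_6 : signT 7 6 = 1 := rfl
lemma idxT_7_7 : idxT 7 7 = 0 := rfl
lemma signT_7_7 : signT 7 7 = -1 := rfl

lemma omul_c0 (x y : Oct) : omul x y 0 = x 0 * y 0 - x 1 * y 1 - x 2 * y 2 - x 3 * y 3 - x 4 * y 4 - x 5 * y 5 - x 6 * y 6 - x 7 * y 7 := by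
  simp only [omul_apply, Fin.sum_univ_eight, idxT_0_0, idxT_0_1, idxT_0_2, idxT_0_3, idxT_0_4, idxT_0_5, idxT_0_6, idxT_0_7, idxT_1_0, idxT_1_1, idxT_1_2, idxT_1_3, idxT_1_4, idxT_1_5, idxT_1_6, idxT_1_7, idxT_2_0, idxT_2_1, idxT_2_2, idxT_2_3, idxT_2_4, idxT_2_5, idxT_2_6, idxT_2_7, idxT_3_0, idxT_3_1, idxT_3_2, idxT_3_3, idxT_3_4, idxT_3_5, idxT_3_6, idxT_3_7, idxT_4_0, idxT_4_1, idxT_4_2, idxT_4_3, idxT_4_4, idxT_4_5, idxT_4_6, idxT_4_7, idxT_5_0, idxT_5_1, idxT_5_2, idxT_5_3, idxT_5_4, idxT_5_5, idxT_5_6, idxT_5_7, idxT_6_0, idxT_6_1, idxT_6_2, idxT_6_3, idxT_6_4, idxT_6_5, idxT_6_6, idxT_6_7, idxT_7_0, idxT_7_1, idxT_7_2, idxT_7_3, idxT_7_4, idxT_7_5, idxT_7_6, idxT_7_7, signT_0_0, signT_0_1, signT_0_2, signT_0_3, signT_0_4, signT_0_5, signT_0_6, signT_0_7, signT_1_0,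 signT_1_1, signT_1_2, signT_1_3, signT_1_4, signT_1_5, signT_1_6, signT_1_7, signT_2_0, signT_2_1, signT_2_2, signT_2_3, signT_2_4, signT_2_5, signT_2_6, signT_2_7, signT_3_0, signT_3_1, signT_3_2, signT_3_3, signT_3_4, signT_3_5, signT_3_6, signT_3_7, signT_4_0, signT_4_1, signT_4_2, signT_4_3, signT_4_4, signT_4_5, signT_4_6, signT_4_7, signT_5_0, signT_5_1, signT_5_2, signT_5_3, signT_5_4, signT_5_5, signT_5_6, signT_5_7, signT_6_0, signT_6_1, signT_6_2, signT_6_3, signT_6_4, signT_6_5, signT_6_6, signT_6_7, signT_7_0, signT_7_1, signT_7_2, signT_7_3, signT_7_4, signT_7_5, signT_7_6, signT_7_7]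
  simp only [Fin.reduceEq, reduceIte, ite_true, ite_false]
  ring

lemma omul_c1 (x y : Oct) : omul x y 1 = x 0 * y 1 + x 1 * y 0 + x 2 * y 4 + x 3 * y 5 - x 4 * y 2 - x 5 * y 3 - x 6 * y 7 + x 7 * y 6 := by
  simp only [omul_apply, Fin.sum_univ_eight, idxT_0_0, idxT_0_1, idxT_0_2, idxT_0_3, idxT_0_4, idxT_0_5, idxT_0_6, idxT_0_7, idxT_1_0, idxT_1_1, idxT_1_2, idxT_1_3, idxT_1_4, idxT_1_5, idxT_1_6, idxT_1_7, idxT_2_0, idxT_2_1, idxT_2_2, idxT_2_3, idxT_2_4, idxT_2_5, idxT_2_6, idxT_2_7, idxT_3_0, idxT_3_1, idxT_3_2, idxT_3_3, idxT_3_4, idxT_3_5, idxT_3_6, idxT_3_7, idxT_4_0, idxT_4_1, idxT_4_2, idxT_4_3, idxT_4_4, idxT_4_5, idxT_4_6, idxT_4_7, idxT_5_0, idxT_5_1, idxT_5_2, idxT_5_3, idxT_5_4, idxT_5_5, idxT_5_6, idxT_5_7, idxT_6_0, idxT_6_1, idxT_6_2, idxT_6_3, idxT_6_4, idxT_6_5,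 idxT_6_6, idxT_6_7, idxT_7_0, idxT_7_1, idxT_7_2, idxT_7_3, idxT_7_4, idxT_7_5, idxT_7_6, idxT_7_7, signT_0_0, signT_0_1, signT_0_2, signT_0_3, signT_0_4, signT_0_5, signT_0_6, signT_0_7, signT_1_0, signT_1_1, signT_1_2, signT_1_3, signT_1_4, signT_1_5, signT_1_6, signT_1_7, signT_2_0, signT_2_1, signT_2_2, signT_2_3, signT_2_4, signT_2_5, signT_2_6, signT_2_7, signT_3_0, signT_3_1, signT_3_2, signT_3_3, signT_3_4, signT_3_5, signT_3_6, signT_3_7, signT_4_0, signT_4_1, signT_4_2, signT_4_3, signT_4_4, signT_4_5, signT_4_6, signT_4_7, signT_5_0, signT_5_1, signT_5_2, signT_5_3, signT_5_4, signT_5_5, signT_5_6, signT_5_7, signT_6_0, signT_6_1, signT_6_2, signT_6_3, signT_6_4, signT_6_5, signT_6_6, signT_6_7, signT_7_0, signT_7_1, signT_7_2, signT_7_3, signT_7_4, signT_7_5, signT_7_6, signT_7_7]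
  simp only [Fin.reduceEq, reduceIte, ite_true, ite_false]
  ring

lemma omul_c2 (x y : Oct) : omul x y 2 = x 0 * y 2 - x 1 * y 4 + x 2 * y 0 + x 3 * y 6 + x 4 * y 1 + x 5 * y 7 - x 6 * y 3 - x 7 * y 5 := by
  simp only [omul_apply, Fin.sum_univ_eight, idxT_0_0, idxT_0_1, idxT_0_2, idxT_0_3, idxT_0_4, idxT_0_5, idxT_0_6, idxT_0_7, idxT_1_0, idxT_1_1, idxT_1_2, idxT_1_3, idxT_1_4, idxT_1_5, idxT_1_6, idxT_1_7, idxT_2_0, idxT_2_1, idxT_2_2, idxT_2_3, idxT_2_4, idxT_2_5, idxT_2_6, idxT_2_7, idxT_3_0, idxT_3_1, idxT_3_2, idxT_3_3, idxT_3_4, idxT_3_5, idxT_3_6, idxT_3_7, idxT_4_0, idxT_4_1, idxT_4_2, idxT_4_3, idxT_4_4, idxT_4_5, idxT_4_6, idxT_4_7, idxT_5_0, idxT_5_1, idxT_5_2, idxT_5_3, idxT_5_4, idxT_5_5, idxT_5_6, idxT_5_7, idxT_6_0, idxT_6_1, idxT_6_2, idxT_6_3, idxT_6_4, idxT_6_5,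 idxT_6_6, idxT_6_7, idxT_7_0, idxT_7_1, idxT_7_2, idxT_7_3, idxT_7_4, idxT_7_5, idxT_7_6, idxT_7_7, signT_0_0, signT_0_1, signT_0_2, signT_0_3, signT_0_4, signT_0_5, signT_0_6, signT_0_7, signT_1_0, signT_1_1, signT_1_2, signT_1_3, signT_1_4, signT_1_5, signT_1_6, signT_1_7, signT_2_0, signT_2_1, signT_2_2, signT_2_3, signT_2_4, signT_2_5, signT_2_6, signT_2_7, signT_3_0, signT_3_1, signT_3_2, signT_3_3, signT_3_4, signT_3_5, signT_3_6, signT_3_7, signT_4_0, signT_4_1, signT_4_2, signT_4_3, signT_4_4, signT_4_5, signT_4_6, signT_4_7, signT_5_0, signT_5_1, signT_5_2, signT_5_3, signT_5_4, signT_5_5, signT_5_6, signT_5_7, signT_6_0, signT_6_1, signT_6_2, signT_6_3, signT_6_4, signT_6_5, signT_6_6, signT_6_7, signT_7_0, signT_7_1, signT_7_2, signT_7_3, signT_7_4, signT_7_5, signT_7_6, signT_7_7]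
  simp only [Fin.reduceEq, reduceIte, ite_true, ite_false]
  ring

lemma omul_c3 (x y : Oct) : omul x y 3 = x 0 * y 3 - x 1 * y 5 - x 2 * y 6 + x 3 * y 0 - x 4 * y 7 + x 5 * y 1 + x 6 * y 2 + x 7 * y 4 := by
  simp only [omul_apply, Fin.sum_univ_eight, idxT_0_0, idxT_0_1, idxT_0_2, idxT_0_3, idxT_0_4, idxT_0_5, idxT_0_6, idxT_0_7, idxT_1_0, idxT_1_1, idxT_1_2, idxT_1_3, idxT_1_4, idxT_1_5, idxT_1_6, idxT_1_7, idxT_2_0, idxT_2_1, idxT_2_2, idxT_2_3, idxT_2_4, idxT_2_5, idxT_2_6, idxT_2_7, idxT_3_0, idxT_3_1, idxT_3_2, idxT_3_3, idxT_3_4, idxT_3_5, idxT_3_6, idxT_3_7, idxT_4_0, idxT_4_1, idxT_4_2, idxT_4_3, idxT_4_4, idxT_4_5, idxT_4_6, idxT_4_7, idxT_5_0, idxT_5_1, idxT_5_2, idxT_5_3, idxT_5_4, idxT_5_5, idxT_5_6, idxT_5_7, idxT_6_0, idxT_6_1, idxT_6_2, idxT_6_3, idxT_6_4, idxT_6_5,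 idxT_6_6, idxT_6_7, idxT_7_0, idxT_7_1, idxT_7_2, idxT_7_3, idxT_7_4, idxT_7_5, idxT_7_6, idxT_7_7, signT_0_0, signT_0_1, signT_0_2, signT_0_3, signT_0_4, signT_0_5, signT_0_6, signT_0_7, signT_1_0, signT_1_1, signT_1_2, signT_1_3, signT_1_4, signT_1_5, signT_1_6, signT_1_7, signT_2_0, signT_2_1, signT_2_2, signT_2_3, signT_2_4, signT_2_5, signT_2_6, signT_2_7, signT_3_0, signT_3_1, signT_3_2, signT_3_3, signT_3_4, signT_3_5, signT_3_6, signT_3_7, signT_4_0, signT_4_1, signT_4_2, signT_4_3, signT_4_4, signT_4_5, signT_4_6, signT_4_7, signT_5_0, signT_5_1, signT_5_2, signT_5_3, signT_5_4, signT_5_5, signT_5_6, signT_5_7, signT_6_0, signT_6_1, signT_6_2, signT_6_3, signT_6_4, signT_6_5, signT_6_6, signT_6_7, signT_7_0, signT_7_1, signT_7_2, signT_7_3, signT_7_4, signT_7_5, signT_7_6, signT_7_7]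
  simp only [Fin.reduceEq, reduceIte, ite_true, ite_false]
  ring

lemma omul_c4 (x y : Oct) : omul x y 4 = x 0 * y 4 + x 1 * y 2 - x 2 * y 1 + x 3 * y 7 + x 4 * y 0 - x 5 * y 6 + x 6 * y 5 - x 7 * y 3 := by
  simp only [omul_apply, Fin.sum_univ_eight, idxT_0_0, idxT_0_1, idxT_0_2, idxT_0_3, idxT_0_4, idxT_0_5, idxT_0_6, idxT_0_7, idxT_1_0, idxT_1_1, idxT_1_2, idxT_1_3, idxT_1_4, idxT_1_5, idxT_1_6, idxT_1_7, idxT_2_0, idxT_2_1, idxT_2_2, idxT_2_3, idxT_2_4, idxT_2_5, idxT_2_6, idxT_2_7, idxT_3_0, idxT_3_1, idxT_3_2, idxT_3_3, idxT_3_4, idxT_3_5, idxT_3_6, idxT_3_7, idxT_4_0, idxT_4_1, idxT_4_2, idxT_4_3, idxT_4_4, idxT_4_5, idxT_4_6, idxT_4_7, idxT_5_0, idxT_5_1, idxT_5_2, idxT_5_3, idxT_5_4, idxT_5_5, idxT_5_6, idxT_5_7, idxT_6_0, idxT_6_1, idxT_6_2, idxT_6_3, idxT_6_4, idxT_6_5,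 idxT_6_6, idxT_6_7, idxT_7_0, idxT_7_1, idxT_7_2, idxT_7_3, idxT_7_4, idxT_7_5, idxT_7_6, idxT_7_7, signT_0_0, signT_0_1, signT_0_2, signT_0_3, signT_0_4, signT_0_5, signT_0_6, signT_0_7, signT_1_0, signT_1_1, signT_1_2, signT_1_3, signT_1_4, signT_1_5, signT_1_6, signT_1_7, signT_2_0, signT_2_1, signT_2_2, signT_2_3, signT_2_4, signT_2_5, signT_2_6, signT_2_7, signT_3_0, signT_3_1, signT_3_2, signT_3_3, signT_3_4, signT_3_5, signT_3_6, signT_3_7, signT_4_0, signT_4_1, signT_4_2, signT_4_3, signT_4_4, signT_4_5, signT_4_6, signT_4_7, signT_5_0, signT_5_1, signT_5_2, signT_5_3, signT_5_4, signT_5_5, signT_5_6, signT_5_7, signT_6_0, signT_6_1, signT_6_2, signT_6_3, signT_6_4, signT_6_5, signT_6_6, signT_6_7, signT_7_0, signT_7_1, signT_7_2, signT_7_3, signT_7_4, signT_7_5, signT_7_6, signT_7_7]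
  simp only [Fin.reduceEq, reduceIte, ite_true, ite_false]
  ring

lemma omul_c5 (x y : Oct) : omul x y 5 = x 0 * y 5 + x 1 * y 3 - x 2 * y 7 - x 3 * y 1 + x 4 * y 6 + x 5 * y 0 - x 6 * y 4 + x 7 * y 2 := by
  simp only [omul_apply, Fin.sum_univ_eight, idxT_0_0, idxT_0_1, idxT_0_2, idxT_0_3, idxT_0_4, idxT_0_5, idxT_0_6, idxT_0_7, idxT_1_0, idxT_1_1, idxT_1_2, idxT_1_3, idxT_1_4, idxT_1_5, idxT_1_6, idxT_1_7, idxT_2_0, idxT_2_1, idxT_2_2, idxT_2_3, idxT_2_4, idxT_2_5, idxT_2_6, idxT_2_7, idxT_3_0, idxT_3_1, idxT_3_2, idxT_3_3, idxT_3_4, idxT_3_5, idxT_3_6, idxT_3_7, idxT_4_0, idxT_4_1, idxT_4_2, idxT_4_3, idxT_4_4, idxT_4_5, idxT_4_6, idxT_4_7, idxT_5_0, idxT_5_1, idxT_5_2, idxT_5_3, idxT_5_4, idxT_5_5, idxT_5_6, idxT_5_7, idxT_6_0, idxT_6_1, idxT_6_2, idxT_6_3, idxT_6_4, idxT_6_5,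 idxT_6_6, idxT_6_7, idxT_7_0, idxT_7_1, idxT_7_2, idxT_7_3, idxT_7_4, idxT_7_5, idxT_7_6, idxT_7_7, signT_0_0, signT_0_1, signT_0_2, signT_0_3, signT_0_4, signT_0_5, signT_0_6, signT_0_7, signT_1_0, signT_1_1, signT_1_2, signT_1_3, signT_1_4, signT_1_5, signT_1_6, signT_1_7, signT_2_0, signT_2_1, signT_2_2, signT_2_3, signT_2_4, signT_2_5, signT_2_6, signT_2_7, signT_3_0, signT_3_1, signT_3_2, signT_3_3, signT_3_4, signT_3_5, signT_3_6, signT_3_7, signT_4_0, signT_4_1, signT_4_2, signT_4_3, signT_4_4, signT_4_5, signT_4_6, signT_4_7, signT_5_0, signT_5_1, signT_5_2, signT_5_3, signT_5_4, signT_5_5, signT_5_6, signT_5_7, signT_6_0, signT_6_1, signT_6_2, signT_6_3, signT_6_4, signT_6_5, signT_6_6, signT_6_7, signT_7_0, signT_7_1, signT_7_2, signT_7_3, signT_7_4, signT_7_5, signT_7_6, signT_7_7]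
  simp only [Fin.reduceEq, reduceIte, ite_true, ite_false]
  ring

lemma omul_c6 (x y : Oct) : omul x y 6 = x 0 * y 6 + x 1 * y 7 + x 2 * y 3 - x 3 * y 2 - x 4 * y 5 + x 5 * y 4 + x 6 * y 0 - x 7 * y 1 := by
  simp only [omul_apply, Fin.sum_univ_eight, idxT_0_0, idxT_0_1, idxT_0_2, idxT_0_3, idxT_0_4, idxT_0_5, idxT_0_6, idxT_0_7, idxT_1_0, idxT_1_1, idxT_1_2, idxT_1_3, idxT_1_4, idxT_1_5, idxT_1_6, idxT_1_7, idxT_2_0, idxT_2_1, idxT_2_2, idxT_2_3, idxT_2_4, idxT_2_5, idxT_2_6, idxT_2_7, idxT_3_0, idxT_3_1, idxT_3_2, idxT_3_3, idxT_3_4, idxT_3_5, idxT_3_6, idxT_3_7, idxT_4_0, idxT_4_1, idxT_4_2, idxT_4_3, idxT_4_4, idxT_4_5, idxT_4_6, idxT_4_7, idxT_5_0, idxT_5_1, idxT_5_2, idxT_5_3, idxT_5_4, idxT_5_5, idxT_5_6, idxT_5_7, idxT_6_0, idxT_6_1, idxT_6_2, idxT_6_3, idxT_6_4, idxT_6_5,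 idxT_6_6, idxT_6_7, idxT_7_0, idxT_7_1, idxT_7_2, idxT_7_3, idxT_7_4, idxT_7_5, idxT_7_6, idxT_7_7, signT_0_0, signT_0_1, signT_0_2, signT_0_3, signT_0_4, signT_0_5, signT_0_6, signT_0_7, signT_1_0, signT_1_1, signT_1_2, signT_1_3, signT_1_4, signT_1_5, signT_1_6, signT_1_7, signT_2_0, signT_2_1, signT_2_2, signT_2_3, signT_2_4, signT_2_5, signT_2_6, signT_2_7, signT_3_0, signT_3_1, signT_3_2, signT_3_3, signT_3_4, signT_3_5, signT_3_6, signT_3_7, signT_4_0, signT_4_1, signT_4_2, signT_4_3, signT_4_4, signT_4_5, signT_4_6, signT_4_7, signT_5_0, signT_5_1, signT_5_2, signT_5_3, signT_5_4, signT_5_5, signT_5_6, signT_5_7, signT_6_0, signT_6_1, signT_6_2, signT_6_3, signT_6_4, signT_6_5, signT_6_6, signT_6_7, signT_7_0, signT_7_1, signT_7_2, signT_7_3, signT_7_4, signT_7_5, signT_7_6, signT_7_7]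
  simp only [Fin.reduceEq, reduceIte, ite_true, ite_false]
  ring

lemma omul_c7 (x y : Oct) : omul x y 7 = x 0 * y 7 - x 1 * y 6 + x 2 * y 5 - x 3 * y 4 + x 4 * y 3 - x 5 * y 2 + x 6 * y 1 + x 7 * y 0 := by
  simp only [omul_apply, Fin.sum_univ_eight, idxT_0_0, idxT_0_1, idxT_0_2, idxT_0_3, idxT_0_4, idxT_0_5, idxT_0_6, idxT_0_7, idxT_1_0, idxT_1_1, idxT_1_2, idxT_1_3, idxT_1_4, idxT_1_5, idxT_1_6, idxT_1_7, idxT_2_0, idxT_2_1, idxT_2_2, idxT_2_3, idxT_2_4, idxT_2_5, idxT_2_6, idxT_2_7, idxT_3_0, idxT_3_1, idxT_3_2, idxT_3_3, idxT_3_4, idxT_3_5, idxT_3_6, idxT_3_7, idxT_4_0, idxT_4_1, idxT_4_2, idxT_4_3, idxT_4_4, idxT_4_5, idxT_4_6, idxT_4_7, idxT_5_0, idxT_5_1, idxT_5_2, idxT_5_3, idxT_5_4, idxT_5_5, idxT_5_6, idxT_5_7, idxT_6_0, idxT_6_1, idxT_6_2, idxT_6_3, idxT_6_4, idxT_6_5,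 idxT_6_6, idxT_6_7, idxT_7_0, idxT_7_1, idxT_7_2, idxT_7_3, idxT_7_4, idxT_7_5, idxT_7_6, idxT_7_7, signT_0_0, signT_0_1, signT_0_2, signT_0_3, signT_0_4, signT_0_5, signT_0_6, signT_0_7, signT_1_0, signT_1_1, signT_1_2, signT_1_3, signT_1_4, signT_1_5, signT_1_6, signT_1_7, signT_2_0, signT_2_1, signT_2_2, signT_2_3, signT_2_4, signT_2_5, signT_2_6, signT_2_7, signT_3_0, signT_3_1, signT_3_2, signT_3_3, signT_3_4, signT_3_5, signT_3_6, signT_3_7, signT_4_0, signT_4_1, signT_4_2, signT_4_3, signT_4_4, signT_4_5, signT_4_6, signT_4_7, signT_5_0, signT_5_1, signT_5_2, signT_5_3, signT_5_4, signT_5_5, signT_5_6, signT_5_7, signT_6_0, signT_6_1, signT_6_2, signT_6_3, signT_6_4, signT_6_5, signT_6_6, signT_6_7, signT_7_0, signT_7_1, signT_7_2, signT_7_3, signT_7_4, signT_7_5, signT_7_6, signT_7_7]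
  simp only [Fin.reduceEq, reduceIte, ite_true, ite_false]
  ring

lemma oct_ext8 {x y : Oct} (h0 : x 0 = y 0) (h1 : x 1 = y 1) (h2 : x 2 = y 2)
    (h3 : x 3 = y 3) (h4 : x 4 = y 4) (h5 : x 5 = y 5) (h6 : x 6 = y 6)
    (h7 : x 7 = y 7) : x = y := by
  apply oct_ext; intro k; fin_cases k <;> assumption

lemma omul_add (a x y : Oct) : omul a (x + y) = omul a x + omul a y := by
  apply oct_ext; intro k
  simp only [omul_apply, PiLp.add_apply, ← Finset.sum_add_distrib]
  refine Finset.sum_congr rfl fun i _ => Finset.sum_congr rfl fun j _ => ?_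
  split_ifs <;> ring

lemma omul_smul (a : Oct) (r : ℝ) (x : Oct) : omul a (r • x) = r • omul a x := by
  apply oct_ext; intro k
  simp only [omul_apply, PiLp.smul_apply, smul_eq_mul, Finset.mul_sum]
  refine Finset.sum_congr rfl fun i _ => Finset.sum_congr rfl fun j _ => ?_
  split_ifs <;> ring

def lmulL (a : Oct) : Oct →L[ℝ] Oct :=
  LinearMap.toContinuousLinearMap
    { toFun := omul a
      map_add' := omul_add a
      map_smul' := omul_smul a }

@[simp] lemma lmulL_apply (a x : Oct) : lmulL a x = omul a x := rfl

lemma omul_zero (a : Oct) : omul a 0 = 0 := map_zero (lmulL a)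
lemma omul_neg (a x : Oct) : omul a (-x) = -omul a x := map_neg (lmulL a) x
lemma omul_sub (a x y : Oct) : omul a (x - y) = omul a x - omul a y := map_sub (lmulL a) x y

lemma omul_omul_same (I : Oct) (h0 : I 0 = 0) (x : Oct) :
    omul I (omul I x) =
      -((I 1 * I 1 + I 2 * I 2 + I 3 * I 3 + I 4 * I 4 + I 5 * I 5 + I 6 * I 6 + I 7 * I 7) • x) := by
  apply oct_ext8 <;>
  · simp only [omul_c0, omul_c1, omul_c2, omul_c3, omul_c4, omul_c5, omul_c6, omul_c7,
      PiLp.neg_apply, PiLp.smul_apply, smul_eq_mul, h0]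
    ring

lemma sphS_sumsq {I : Oct} (hI : I ∈ sphS) : ∑ i, I i * I i = 1 := by
  have h := hI.2
  rw [EuclideanSpace.norm_eq] at h
  have h2 : ∑ i, ‖I i‖ ^ 2 = 1 := Real.sqrt_eq_one.mp h
  calc ∑ i, I i * I i = ∑ i, ‖I i‖ ^ 2 := by
        refine Finset.sum_congr rfl fun i _ => ?_
        rw [Real.norm_eq_abs, sq_abs]; ring
    _ = 1 := h2

lemma omul_omul_selfS {I : Oct} (hI : I ∈ sphS) (x : Oct) :
    omul I (omul I x) = -x := by
  have h0 : I 0 = 0 := hI.1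
  rw [omul_omul_same I h0 x]
  have hs := sphS_sumsq hI
  rw [Fin.sum_univ_eight, h0] at hs
  have : (I 1 * I 1 + I 2 * I 2 + I 3 * I 3 + I 4 * I 4 + I 5 * I 5 + I 6 * I 6 + I 7 * I 7) = 1 := by
    linarith
  rw [this, one_smul]

lemma neg_mem_sphS {I : Oct} (hI : I ∈ sphS) : -I ∈ sphS := by
  refine ⟨?_, by rw [norm_neg]; exact hI.2⟩
  show (-I) 0 = 0
  have h0 : I 0 = 0 := hI.1
  simp [PiLp.neg_apply, h0]



/-- the competitor function from the representation formula -/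
def psiF (f : Oct → Oct) (I J : Oct) : ℝ × ℝ → Oct := fun p =>
  (1/2 : ℝ) • (f (p.1 • oone + p.2 • J) + f (p.1 • oone + (-p.2) • J))
  + (1/2 : ℝ) • omul I (omul J (f (p.1 • oone + (-p.2) • J) - f (p.1 • oone + p.2 • J)))

def dF (f : Oct → Oct) (I J : Oct) : ℝ × ℝ → Oct := fun p =>
  f (p.1 • oone + p.2 • I) - psiF f I J p

def HF (f : Oct → Oct) (I J : Oct) (k : Fin 8) : ℂ → ℂ := fun z =>
  ((dF f I J (z.re, z.im)) k : ℝ) - Complex.I * ((omul I (dF f I J (z.re, z.im))) k : ℝ)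

/-- the slice projection functional -/
def phiF (I : Oct) (k : Fin 8) : Oct →L[ℝ] ℂ :=
  Complex.ofRealCLM.comp (EuclideanSpace.proj k)
    - Complex.I • Complex.ofRealCLM.comp ((EuclideanSpace.proj k).comp (lmulL I))

lemma phiF_apply (I : Oct) (k : Fin 8) (y : Oct) :
    phiF I k y = ((y k : ℝ) : ℂ) - Complex.I * ((omul I y) k : ℝ) := by
  simp [phiF, ContinuousLinearMap.sub_apply, ContinuousLinearMap.smul_apply,
    ContinuousLinearMap.comp_apply, smul_eq_mul]

lemma phiF_omul {I : Oct} (hI : I ∈ sphS) (k : Fin 8) (y : Oct) :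
    phiF I k (omul I y) = Complex.I * phiF I k y := by
  rw [phiF_apply, phiF_apply, omul_omul_selfS hI]
  have : ((-y) k : ℝ) = -(y k) := rfl
  rw [this]
  push_cast
  ring_nf
  rw [Complex.I_sq]
  ring

lemma HF_eq (f : Oct → Oct) (I J : Oct) (k : Fin 8) (z : ℂ) :
    HF f I J k z = phiF I k (dF f I J (z.re, z.im)) := by
  rw [phiF_apply]; rfl

lemma dF_hasFDeriv {Ω : Set Oct} (f : Oct → Oct) (hf : SliceMonogenicOn f Ω)
    {I J : Oct} (hI : I ∈ sphS) (hJ : J ∈ sphS) {z : ℂ}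
    (hz : z.re • oone + z.im • I ∈ Ω)
    (hzJ : z.re • oone + z.im • J ∈ Ω)
    (hzJ' : z.re • oone + (-z.im) • J ∈ Ω) :
    ∃ D : ℝ × ℝ →L[ℝ] Oct, HasFDerivAt (dF f I J) D (z.re, z.im) ∧
      D (0, 1) = omul I (D (1, 0)) := by
  obtain ⟨hdI, hcrI⟩ := hf I hI z.re z.im hz
  obtain ⟨hdJ, hcrJ⟩ := hf J hJ z.re z.im hzJ
  obtain ⟨hdJ', hcrJ'⟩ := hf J hJ z.re (-z.im) hzJ'
  set DI := fderiv ℝ (fun p : ℝ × ℝ => f (p.1 • oone + p.2 • I)) (z.re, z.im) with hDI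
  set DJ := fderiv ℝ (fun p : ℝ × ℝ => f (p.1 • oone + p.2 • J)) (z.re, z.im) with hDJ
  set DJ' := fderiv ℝ (fun p : ℝ × ℝ => f (p.1 • oone + p.2 • J)) (z.re, -z.im) with hDJ'
  have PI : HasFDerivAt (fun p : ℝ × ℝ => f (p.1 • oone + p.2 • I)) DI (z.re, z.im) :=
    hdI.hasFDerivAt
  have PJ : HasFDerivAt (fun p : ℝ × ℝ => f (p.1 • oone + p.2 • J)) DJ (z.re, z.im) :=
    hdJ.hasFDerivAt
  have PJ' : HasFDerivAt (fun p : ℝ × ℝ => f (p.1 • oone + p.2 • J)) DJ' (z.re, -z.im) :=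
    hdJ'.hasFDerivAt
  set N : ℝ × ℝ →L[ℝ] ℝ × ℝ :=
    (ContinuousLinearMap.fst ℝ ℝ ℝ).prod (-(ContinuousLinearMap.snd ℝ ℝ ℝ)) with hN
  have hNder : HasFDerivAt (fun p : ℝ × ℝ => ((p.1, -p.2) : ℝ × ℝ)) N (z.re, z.im) :=
    N.hasFDerivAt
  have Pbeta : HasFDerivAt (fun p : ℝ × ℝ => f (p.1 • oone + (-p.2) • J)) (DJ'.comp N)
      (z.re, z.im) := by
    exact PJ'.comp (x := (z.re, z.im)) hNder
  have Ppsi : HasFDerivAt (psiF f I J)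
      ((1/2 : ℝ) • (DJ + DJ'.comp N)
        + (1/2 : ℝ) • (((lmulL I).comp (lmulL J)).comp (DJ'.comp N - DJ))) (z.re, z.im) := by
    have h1 : HasFDerivAt
        (fun p : ℝ × ℝ => (1/2 : ℝ) • (f (p.1 • oone + p.2 • J) + f (p.1 • oone + (-p.2) • J)))
        ((1/2 : ℝ) • (DJ + DJ'.comp N)) (z.re, z.im) :=
      (PJ.add Pbeta).const_smul (1/2 : ℝ)
    have h2 : HasFDerivAt
        (fun p : ℝ × ℝ => (1/2 : ℝ) • omul I (omul J
          (f (p.1 • oone + (-p.2) • J) - f (p.1 • oone + p.2 • J))))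
        ((1/2 : ℝ) • (((lmulL I).comp (lmulL J)).comp (DJ'.comp N - DJ))) (z.re, z.im) :=
      ((((lmulL I).comp (lmulL J)).hasFDerivAt).comp (x := (z.re, z.im))
        (Pbeta.sub PJ)).const_smul (1/2 : ℝ)
    exact h1.add h2
  refine ⟨DI - ((1/2 : ℝ) • (DJ + DJ'.comp N)
        + (1/2 : ℝ) • (((lmulL I).comp (lmulL J)).comp (DJ'.comp N - DJ))),
    PI.sub Ppsi, ?_⟩
  -- now the Cauchy-Riemann identity
  have e1 : DI (0, 1) = omul I (DI (1, 0)) := by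
    have h2 := congrArg (omul I) hcrI
    rw [omul_add, omul_omul_selfS hI, omul_zero, add_neg_eq_zero] at h2
    exact h2.symm
  have e2 : DJ (1, 0) = -omul J (DJ (0, 1)) := eq_neg_of_add_eq_zero_left hcrJ
  have e3 : DJ' (1, 0) = -omul J (DJ' (0, 1)) := eq_neg_of_add_eq_zero_left hcrJ'
  have hN10 : N ((1 : ℝ), (0 : ℝ)) = (1, 0) := by
    simp [hN, ContinuousLinearMap.prod_apply]
  have hN01 : N ((0 : ℝ), (1 : ℝ)) = (0, -1) := by
    simp [hN, ContinuousLinearMap.prod_apply]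
  have hneg : DJ' ((0 : ℝ), (-1 : ℝ)) = -DJ' (0, 1) := by
    have : ((0 : ℝ), (-1 : ℝ)) = -((0 : ℝ), (1 : ℝ)) := by simp [Prod.ext_iff]
    rw [this, map_neg]
  simp only [ContinuousLinearMap.sub_apply, ContinuousLinearMap.add_apply,
    ContinuousLinearMap.smul_apply, ContinuousLinearMap.comp_apply, hN10, hN01, hneg,
    lmulL_apply, e1, e2, e3]
  simp only [omul_sub, omul_neg, omul_add, omul_smul, omul_omul_selfS hI, omul_omul_selfS hJ]
  module

lemma HF_diffOn {Ω : Set Oct} (f : Oct → Oct) (hf : SliceMonogenicOn f Ω)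
    {I J : Oct} (hI : I ∈ sphS) (hJ : J ∈ sphS)
    (haxJ : ∀ z : ℂ, z.re • oone + z.im • I ∈ Ω → z.re • oone + z.im • J ∈ Ω)
    (haxJ' : ∀ z : ℂ, z.re • oone + z.im • I ∈ Ω → z.re • oone + (-z.im) • J ∈ Ω)
    (k : Fin 8) :
    DifferentiableOn ℂ (HF f I J k) {z : ℂ | z.re • oone + z.im • I ∈ Ω} := by
  intro z hz
  obtain ⟨D, hD, hCR⟩ := dF_hasFDeriv f hf hI hJ hz (haxJ z hz) (haxJ' z hz)
  -- real derivative of HF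
  set R : ℂ →L[ℝ] ℝ × ℝ := Complex.equivRealProdCLM.toContinuousLinearMap with hR
  have hRder : HasFDerivAt (fun z : ℂ => ((z.re, z.im) : ℝ × ℝ)) R z := R.hasFDerivAt
  have hdR : HasFDerivAt (fun z : ℂ => dF f I J (z.re, z.im)) (D.comp R) z :=
    by have := hD.comp (x := z) hRder; exact this
  have hHR : HasFDerivAt (HF f I J k) ((phiF I k).comp (D.comp R)) z := by
    have h1 : HasFDerivAt (fun z : ℂ => phiF I k (dF f I J (z.re, z.im)))
        ((phiF I k).comp (D.comp R)) z := ((phiF I k).hasFDerivAt).comp (x := z) hdR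
    have h2 : HF f I J k = fun z : ℂ => phiF I k (dF f I J (z.re, z.im)) := by
      funext w; rw [HF_eq]
    rw [h2]
    exact h1
  -- the complex derivative
  set c : ℂ := phiF I k (D (1, 0)) with hc
  have hCLM : (c • (1 : ℂ →L[ℂ] ℂ)).restrictScalars ℝ = (phiF I k).comp (D.comp R) := by
    apply ContinuousLinearMap.ext
    intro w
    have hw : (R w) = (w.re, w.im) := rfl
    have hsplit : ((w.re, w.im) : ℝ × ℝ) = w.re • ((1 : ℝ), (0 : ℝ)) + w.im • ((0 : ℝ), (1 : ℝ)) := by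
      simp [Prod.ext_iff]
    have : (phiF I k) (D (R w)) = w.re • c + w.im • (Complex.I * c) := by
      rw [hw, hsplit, map_add, _root_.map_smul, _root_.map_smul, map_add, _root_.map_smul, _root_.map_smul, hCR,
        phiF_omul hI, hc]
    simp only [ContinuousLinearMap.coe_restrictScalars', ContinuousLinearMap.comp_apply,
      ContinuousLinearMap.smul_apply, ContinuousLinearMap.one_apply]
    rw [this, Complex.real_smul, Complex.real_smul, smul_eq_mul]
    linear_combination c * (Complex.re_add_im w).symm
  have hC : HasFDerivAt (HF f I J k) (c • (1 : ℂ →L[ℂ] ℂ)) z :=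
    hasFDerivAt_of_restrictScalars ℝ hHR hCLM
  exact hC.differentiableAt.differentiableWithinAt

lemma dF_real (f : Oct → Oct) (I J : Oct) (u : ℝ) :
    dF f I J (u, 0) = 0 := by
  simp only [dF, psiF, neg_zero, zero_smul, add_zero, sub_self, omul_zero, smul_zero]
  module

lemma HF_real (f : Oct → Oct) (I J : Oct) (k : Fin 8) {z : ℂ} (hz : z.im = 0) :
    HF f I J k z = 0 := by
  simp only [HF, hz, dF_real, PiLp.zero_apply, omul_zero, Complex.ofReal_zero, mul_zero,
    sub_zero]

lemma oone_apply (i : Fin 8) : oone i = if i = 0 then 1 else 0 := by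
  simp [oone, unit, EuclideanSpace.single_apply]

lemma slice_coord {I : Oct} (hI : I ∈ sphS) (u v : ℝ) :
    (u • oone + v • I) 0 = u ∧ (∑ i, I i * (u • oone + v • I) i) = v := by
  have h0 : I 0 = 0 := hI.1
  constructor
  · simp [PiLp.add_apply, PiLp.smul_apply, oone_apply, h0]
  · have : ∀ i, I i * ((u • oone + v • I) i) = u * (I i * oone i) + v * (I i * I i) := by
      intro i
      simp only [PiLp.add_apply, PiLp.smul_apply, smul_eq_mul]
      ring
    rw [Finset.sum_congr rfl fun i _ => this i, Finset.sum_add_distrib,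
      ← Finset.mul_sum, ← Finset.mul_sum, sphS_sumsq hI]
    have h1 : (∑ i, I i * oone i) = I 0 := by
      simp [oone_apply, Finset.sum_ite_eq, mul_ite]
    rw [h1, h0]
    ring

lemma preconn_U {I : Oct} (hI : I ∈ sphS) {Ω : Set Oct}
    (hs : IsConnected (Ω ∩ sliceC I)) :
    IsPreconnected {z : ℂ | z.re • oone + z.im • I ∈ Ω} := by
  set g : Oct → ℂ := fun x => ((x 0 : ℝ) : ℂ) + ((∑ i, I i * x i : ℝ) : ℂ) * Complex.I with hg
  have hgc : Continuous g := by
    have h1 : Continuous fun x : Oct => (x 0 : ℝ) := (EuclideanSpace.proj (0 : Fin 8)).continuous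
    have h2 : Continuous fun x : Oct => (∑ i, I i * x i : ℝ) := by
      apply continuous_finset_sum
      intro i _
      exact continuous_const.mul (EuclideanSpace.proj i).continuous
    exact (Complex.continuous_ofReal.comp h1).add
      ((Complex.continuous_ofReal.comp h2).mul continuous_const)
  have him : {z : ℂ | z.re • oone + z.im • I ∈ Ω} = g '' (Ω ∩ sliceC I) := by
    ext z
    constructor
    · intro hz
      refine ⟨z.re • oone + z.im • I, ⟨hz, ⟨z.re, z.im, rfl⟩⟩, ?_⟩
      obtain ⟨c1, c2⟩ := slice_coord hI z.re z.im
      rw [hg]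
      simp only [c1, c2]
      exact Complex.re_add_im z
    · rintro ⟨x, ⟨hxΩ, ⟨a, b, rfl⟩⟩, rfl⟩
      obtain ⟨c1, c2⟩ := slice_coord hI a b
      show (g _).re • oone + (g _).im • I ∈ Ω
      rw [hg]
      simp only [c1, c2]
      have hre : (((a : ℝ) : ℂ) + ((b : ℝ) : ℂ) * Complex.I).re = a := by simp
      have him' : (((a : ℝ) : ℂ) + ((b : ℝ) : ℂ) * Complex.I).im = b := by simp
      rw [hre, him']
      exact hxΩ
  rw [him]
  exact hs.isPreconnected.image g hgc.continuousOn

lemma aux_dF_zero {Ω : Set Oct} (hopen : IsOpen Ω) (f : Oct → Oct)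
    (hf : SliceMonogenicOn f Ω) {I J : Oct} (hI : I ∈ sphS) (hJ : J ∈ sphS)
    (haxJ : ∀ z : ℂ, z.re • oone + z.im • I ∈ Ω → z.re • oone + z.im • J ∈ Ω)
    (haxJ' : ∀ z : ℂ, z.re • oone + z.im • I ∈ Ω → z.re • oone + (-z.im) • J ∈ Ω)
    (hconnU : IsPreconnected {z : ℂ | z.re • oone + z.im • I ∈ Ω})
    (r : ℝ) (hr : r • oone ∈ Ω) (u v : ℝ) (huv : u • oone + v • I ∈ Ω) :
    dF f I J (u, v) = 0 := by
  set U : Set ℂ := {z : ℂ | z.re • oone + z.im • I ∈ Ω} with hU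
  have hUopen : IsOpen U := by
    have hc : Continuous fun z : ℂ => z.re • oone + z.im • I :=
      (Complex.continuous_re.smul continuous_const).add
        (Complex.continuous_im.smul continuous_const)
    exact hopen.preimage hc
  have hz0 : ((r : ℂ)) ∈ U := by
    show (r : ℂ).re • oone + (r : ℂ).im • I ∈ Ω
    simpa using hr
  have hfreq : ∃ᶠ z in nhdsWithin (r : ℂ) {(r : ℂ)}ᶜ, ∀ k : Fin 8, HF f I J k z = 0 := by
    have htend : Filter.Tendsto (fun n : ℕ => ((r + 1 / (n + 1) : ℝ) : ℂ)) Filter.atTop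
        (nhdsWithin (r : ℂ) {(r : ℂ)}ᶜ) := by
      rw [tendsto_nhdsWithin_iff]
      constructor
      · have h1 : Filter.Tendsto (fun n : ℕ => (r + 1 / (n + 1) : ℝ)) Filter.atTop (nhds r) := by
          have := tendsto_const_nhds (x := r) (f := Filter.atTop (α := ℕ))
          have h2 := this.add tendsto_one_div_add_atTop_nhds_zero_nat
          simpa using h2
        exact (Complex.continuous_ofReal.tendsto r).comp h1
      · refine Filter.Eventually.of_forall fun n => ?_
        simp only [Set.mem_compl_iff, Set.mem_singleton_iff]
        intro hc
        have := Complex.ofReal_injective hc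
        have hpos : (0:ℝ) < 1 / (n + 1) := by positivity
        linarith [this]
    refine htend.frequently (Filter.Eventually.frequently (Filter.Eventually.of_forall ?_))
    intro n k
    exact HF_real f I J k (by simp)
  have hzuv : ((u : ℂ) + (v : ℂ) * Complex.I) ∈ U := by
    show _ • oone + _ • I ∈ Ω
    have hre : ((u : ℂ) + (v : ℂ) * Complex.I).re = u := by simp
    have him : ((u : ℂ) + (v : ℂ) * Complex.I).im = v := by simp
    rw [hre, him]
    exact huv
  have hvanish : ∀ k : Fin 8, HF f I J k ((u : ℂ) + (v : ℂ) * Complex.I) = 0 := by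
    intro k
    have hana : AnalyticOnNhd ℂ (HF f I J k) U :=
      (HF_diffOn f hf hI hJ haxJ haxJ' k).analyticOnNhd hUopen
    have heq := hana.eqOn_zero_of_preconnected_of_frequently_eq_zero hconnU hz0
      (hfreq.mono fun z hz => hz k)
    exact heq hzuv
  apply oct_ext
  intro k
  have hk := hvanish k
  have hre : ((u : ℂ) + (v : ℂ) * Complex.I).re = u := by simp
  have him : ((u : ℂ) + (v : ℂ) * Complex.I).im = v := by simp
  rw [HF, hre, him] at hk
  rw [Complex.ext_iff] at hk
  obtain ⟨hk1, _⟩ := hk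
  simpa using hk1


end Oct

/-- **Representation Formula.** Let `Ω ⊆ 𝕆` be an axially symmetric slice
domain and `f` slice monogenic on `Ω`. Then for all real `u,v` with `u + Iv ∈ Ω` and all
imaginary units `I, J ∈ 𝕊`:
`f(u+Iv) = ½[f(u+vJ) + f(u-vJ)] + ½ I[J(f(u-vJ) - f(u+vJ))]`. -/
theorem representation_formula
    (Ω : Set Oct) (hopen : IsOpen Ω) (hconn : IsConnected Ω)
    (hreal : (Ω ∩ {x : Oct | ∃ r : ℝ, x = r • Oct.oone}).Nonempty)
    (hslice : ∀ I ∈ Oct.sphS, IsConnected (Ω ∩ Oct.sliceC I))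
    (haxsym : ∀ u v : ℝ, ∀ I ∈ Oct.sphS, ∀ J ∈ Oct.sphS,
      u • Oct.oone + v • I ∈ Ω → u • Oct.oone + v • J ∈ Ω)
    (f : Oct → Oct) (hf : Oct.SliceMonogenicOn f Ω) :
    ∀ I ∈ Oct.sphS, ∀ J ∈ Oct.sphS, ∀ u v : ℝ, u • Oct.oone + v • I ∈ Ω →
      f (u • Oct.oone + v • I)
        = (1 / 2 : ℝ) • (f (u • Oct.oone + v • J) + f (u • Oct.oone - v • J))
          + (1 / 2 : ℝ) • Oct.omul I
              (Oct.omul J (f (u • Oct.oone - v • J) - f (u • Oct.oone + v • J))) := by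
  intro I hI J hJ u v hmem
  have haxJ : ∀ z : ℂ, z.re • Oct.oone + z.im • I ∈ Ω → z.re • Oct.oone + z.im • J ∈ Ω :=
    fun z hz => haxsym z.re z.im I hI J hJ hz
  have haxJ' : ∀ z : ℂ, z.re • Oct.oone + z.im • I ∈ Ω → z.re • Oct.oone + (-z.im) • J ∈ Ω := by
    intro z hz
    have h1 : z.re • Oct.oone + (-z.im) • (-I) ∈ Ω := by
      rw [smul_neg, neg_smul, neg_neg]
      exact hz
    exact haxsym z.re (-z.im) (-I) (Oct.neg_mem_sphS hI) J hJ h1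
  obtain ⟨x, hxΩ, r, rfl⟩ := hreal
  have hconnU := Oct.preconn_U hI (hslice I hI)
  have key := Oct.aux_dF_zero hopen f hf hI hJ haxJ haxJ' hconnU r hxΩ u v hmem
  simp only [Oct.dF] at key
  have heq : f (u • Oct.oone + v • I) = Oct.psiF f I J (u, v) := sub_eq_zero.mp key
  rw [heq]
  simp only [Oct.psiF, neg_smul, ← sub_eq_add_neg]
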